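/- Let α be an element of order n'_a and β an element of order n_b in a finite field K, with gcd(n'_a, n_b) = 1, and let m_a, m_b be integers with gcd(n'_a, m_a) = gcd(n_b, m_b) = 1. Let E ⊆ {0,…,n'_a−1}, let Y ⊆ {0,…,n_b−1} be nonempty, and define Λ(X) = Π_{i∈E} Π_{j∈Y} (1 − X α^{i m_a} β^{j m_b}). Fix j_0 ∈ Y and for each i ∈ {0,…,n'_a−1} set γ_i = β^{−j_0 m_b} α^{−i m_a}. Then Λ(γ_i) = 0 if and only if i ∈ E. -/

import Mathlib

open Polynomial

lemma zpow_order_dvd {G : Type*} [Group G] (u : G) (x : ℤ) :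
    orderOf (u ^ x) ∣ orderOf u := by
  apply orderOf_dvd_of_pow_eq_one
  rw [← zpow_natCast, ← zpow_mul, mul_comm, zpow_mul, zpow_natCast,
    pow_orderOf_eq_one, one_zpow]

lemma coprime_orders_mul_eq_one {G : Type*} [CommGroup G] {u v : G} {m n : ℕ}
    (hu : orderOf u = m) (hv : orderOf v = n) (h : Nat.Coprime m n)
    {x y : ℤ} (hxy : u ^ x * v ^ y = 1) : u ^ x = 1 ∧ v ^ y = 1 := by
  have h1 : u ^ x = (v ^ y)⁻¹ := by
    rw [eq_inv_iff_mul_eq_one]; exact hxy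
  have d1 : orderOf (u ^ x) ∣ m := hu ▸ zpow_order_dvd u x
  have d2 : orderOf (u ^ x) ∣ n := by
    rw [h1, orderOf_inv]; exact hv ▸ zpow_order_dvd v y
  have : orderOf (u ^ x) = 1 := Nat.eq_one_of_dvd_coprimes h d1 d2
  have hux : u ^ x = 1 := orderOf_eq_one_iff.mp this
  refine ⟨hux, ?_⟩
  rw [hux, one_mul] at hxy; exact hxy

theorem chienSearch_correct
    {K : Type*} [Field K] [Fintype K]
    (n'a nb : ℕ) (α β : Kˣ) (hα : orderOf α = n'a) (hβ : orderOf β = nb)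
    (hcop : Nat.Coprime n'a nb)
    (ma mb : ℤ) (hma : Int.gcd (n'a : ℤ) ma = 1) (hmb : Int.gcd (nb : ℤ) mb = 1)
    (E : Finset ℕ) (hEsub : ∀ i ∈ E, i < n'a)
    (Y : Finset ℕ) (hY : Y.Nonempty) (hYsub : ∀ j ∈ Y, j < nb)
    (j₀ : ℕ) (hj₀ : j₀ ∈ Y) :
    ∀ i < n'a,
      Polynomial.eval ((β ^ (-(j₀ : ℤ) * mb) * α ^ (-(i : ℤ) * ma) : Kˣ) : K)
          (∏ i' ∈ E, ∏ j ∈ Y,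
            (1 - X * C ((α ^ ((i' : ℤ) * ma) * β ^ ((j : ℤ) * mb) : Kˣ) : K))) = 0
        ↔ i ∈ E := by
  intro i hi
  simp only [eval_prod, Finset.prod_eq_zero_iff, eval_sub, eval_one, eval_mul, eval_X, eval_C,
    sub_eq_zero]
  constructor
  · rintro ⟨i', hi', j, hj, h⟩
    -- h : 1 = γ * c
    have hu : (β ^ (-(j₀:ℤ) * mb) * α ^ (-(i:ℤ) * ma)) *
        (α ^ ((i':ℤ) * ma) * β ^ ((j:ℤ) * mb)) = 1 := by
      rw [← Units.val_inj, Units.val_mul, Units.val_one]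
      exact h.symm
    have hu' : α ^ (((i':ℤ) - i) * ma) * β ^ (((j:ℤ) - j₀) * mb) = 1 := by
      have e1 : ((i' : ℤ) - i) * ma = (i' : ℤ) * ma + (-(i : ℤ) * ma) := by ring
      have e2 : ((j : ℤ) - j₀) * mb = (j : ℤ) * mb + (-(j₀ : ℤ) * mb) := by ring
      rw [e1, e2, zpow_add, zpow_add, ← hu]
      ac_rfl
    obtain ⟨ha, hb⟩ := coprime_orders_mul_eq_one hα hβ hcop hu'
    have hdvd : (n'a : ℤ) ∣ ((i':ℤ) - i) * ma := by
      rw [← hα]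
      exact orderOf_dvd_iff_zpow_eq_one.mpr ha
    have hdvd2 : (n'a : ℤ) ∣ ((i':ℤ) - i) :=
      (Int.isCoprime_iff_gcd_eq_one.mpr hma).dvd_of_dvd_mul_right hdvd
    have h3 : n'a ∣ ((i' : ℤ) - i).natAbs := by
      have := Int.natAbs_dvd_natAbs.mpr hdvd2
      simpa using this
    have h1 := hEsub i' hi'
    have h4 : ((i' : ℤ) - i).natAbs < n'a := by omega
    have h5 := Nat.eq_zero_of_dvd_of_lt h3 h4
    have : i' = i := by omega
    rwa [← this]
  · intro hiE
    refine ⟨i, hiE, j₀, hj₀, ?_⟩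
    have : (β ^ (-(j₀:ℤ) * mb) * α ^ (-(i:ℤ) * ma)) *
        (α ^ ((i:ℤ) * ma) * β ^ ((j₀:ℤ) * mb)) = 1 := by
      group
    rw [← Units.val_mul, this, Units.val_one]
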